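/- Let I be a database, I' its ∼-quotient with respect to ALCQ bisimilarity, and P, N ⊆ adom(I). An ALCQ concept C fits P, N in I if and only if C fits {⟨[p],1⟩ | p ∈ P}, {⟨[n],1⟩ | n ∈ N} in I'. -/

import Mathlib

structure DB (CN RN Ind : Type) where
  concFact : CN → Ind → Prop
  roleFact : RN → Ind → Ind → Prop
  adom : Set Ind

def DB.succ {CN RN Ind : Type} (I : DB CN RN Ind) (r : RN) (a : Ind) : Set Ind :=
  {b | I.roleFact r a b}

def IsALCQBisim {CN RN Ind : Type} (I : DB CN RN Ind) (S : Ind → Ind → Prop) : Prop :=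
  (∀ a b, S a b → a ∈ I.adom ∧ b ∈ I.adom) ∧
  ∀ a b, S a b →
    (∀ A, I.concFact A a ↔ I.concFact A b) ∧
    (∀ r, ∀ D ⊆ I.succ r a, ∃ E ⊆ I.succ r b, ∃ f : Ind → Ind,
        Set.BijOn f D E ∧ ∀ d ∈ D, S d (f d)) ∧
    (∀ r, ∀ E ⊆ I.succ r b, ∃ D ⊆ I.succ r a, ∃ f : Ind → Ind,
        Set.BijOn f D E ∧ ∀ d ∈ D, S d (f d))

inductive ALCQ (CN RN : Type) : Type where
  | top : ALCQ CN RN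
  | atom (A : CN) : ALCQ CN RN
  | neg (C : ALCQ CN RN) : ALCQ CN RN
  | inter (C D : ALCQ CN RN) : ALCQ CN RN
  | ge (n : ℕ) (r : RN) (C : ALCQ CN RN) : ALCQ CN RN
  | le (n : ℕ) (r : RN) (C : ALCQ CN RN) : ALCQ CN RN

def ALCQ.sem {CN RN Ind : Type} (I : DB CN RN Ind) : ALCQ CN RN → Set Ind
  | .top => I.adom
  | .atom A => {a ∈ I.adom | I.concFact A a}
  | .neg C => I.adom \ C.sem I
  | .inter C D => C.sem I ∩ D.sem I
  | .ge n r C => {a ∈ I.adom | n ≤ (I.succ r a ∩ C.sem I).ncard}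
  | .le n r C => {a ∈ I.adom | (I.succ r a ∩ C.sem I).ncard ≤ n}

def Fits {CN RN Ind : Type} (I : DB CN RN Ind) (C : ALCQ CN RN)
    (P N : Set Ind) : Prop :=
  (∀ a ∈ P, a ∈ C.sem I) ∧ ∀ b ∈ N, b ∉ C.sem I

/-- `a` and `b` are ALCQ-bisimilar in `I`. -/
def Bisimilar {CN RN Ind : Type} (I : DB CN RN Ind) (a b : Ind) : Prop :=
  ∃ S : Ind → Ind → Prop, IsALCQBisim I S ∧ S a b

/-- The equivalence class `[a]` of `a` under the maximal ALCQ bisimulation. -/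
def cls {CN RN Ind : Type} (I : DB CN RN Ind) (a : Ind) : Set Ind :=
  {b | Bisimilar I a b}

/-- `max_{b ∈ adom(I), r} |succ_I^r(b) ∩ X|`. -/
noncomputable def maxCnt {CN RN Ind : Type} (I : DB CN RN Ind) (X : Set Ind) : ℕ :=
  sSup {n | ∃ b ∈ I.adom, ∃ r : RN, n = (I.succ r b ∩ X).ncard}

/-- The domain of the ∼-quotient: pairs `⟨[a], i⟩` with `1 ≤ i ≤ max_{b,r} |succ_I^r(b) ∩ [a]|`
(at least the copy `i = 1` is always present). -/
def qadom {CN RN Ind : Type} (I : DB CN RN Ind) : Set (Set Ind × ℕ) :=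
  {p | ∃ a ∈ I.adom, p.1 = cls I a ∧ 1 ≤ p.2 ∧ p.2 ≤ max 1 (maxCnt I p.1)}

/-- The ∼-quotient database `I'`. -/
noncomputable def quotDB {CN RN Ind : Type} (I : DB CN RN Ind) :
    DB CN RN (Set Ind × ℕ) where
  concFact := fun A p => p ∈ qadom I ∧ ∃ a, p.1 = cls I a ∧ I.concFact A a
  roleFact := fun r p q => p ∈ qadom I ∧ q ∈ qadom I ∧
    ∃ a, p.1 = cls I a ∧ q.2 ≤ (I.succ r a ∩ q.1).ncard
  adom := qadom I

/-- ALCQ bisimulations between two databases. -/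
def IsALCQBisim2 {CN RN Ind₁ Ind₂ : Type} (I : DB CN RN Ind₁) (J : DB CN RN Ind₂)
    (S : Ind₁ → Ind₂ → Prop) : Prop :=
  (∀ a b, S a b → a ∈ I.adom ∧ b ∈ J.adom) ∧
  ∀ a b, S a b →
    (∀ A, I.concFact A a ↔ J.concFact A b) ∧
    (∀ r, ∀ D ⊆ I.succ r a, ∃ E ⊆ J.succ r b, ∃ f : Ind₁ → Ind₂,
        Set.BijOn f D E ∧ ∀ d ∈ D, S d (f d)) ∧
    (∀ r, ∀ E ⊆ J.succ r b, ∃ D ⊆ I.succ r a, ∃ f : Ind₁ → Ind₂,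
        Set.BijOn f D E ∧ ∀ d ∈ D, S d (f d))

open Classical
noncomputable def rnk {α : Type} (F : Set α) (d : α) : ℕ :=
  1 + (F ∩ {x | WellOrderingRel x d}).ncard

lemma one_le_rnk {α : Type} (F : Set α) (d : α) : 1 ≤ rnk F d := Nat.le_add_right 1 _

lemma rnk_le {α : Type} {F : Set α} (hF : F.Finite) {d : α} (hd : d ∈ F) :
    rnk F d ≤ F.ncard := by
  have h1 : F ∩ {x | WellOrderingRel x d} ⊆ F \ {d} := by
    rintro x ⟨hx, hlt⟩
    refine ⟨hx, fun he => ?_⟩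
    subst he
    exact irrefl_of WellOrderingRel x hlt
  have h2 := Set.ncard_le_ncard h1 hF.diff
  have h3 : (F \ {d}).ncard = F.ncard - 1 := Set.ncard_diff_singleton_of_mem hd
  have h4 : 0 < F.ncard := (Set.ncard_pos hF).2 ⟨d, hd⟩
  unfold rnk; omega

lemma rnk_lt {α : Type} {F : Set α} (hF : F.Finite) {x y : α} (hx : x ∈ F)
    (h : WellOrderingRel x y) : rnk F x < rnk F y := by
  have hss : F ∩ {z | WellOrderingRel z x} ⊂ F ∩ {z | WellOrderingRel z y} := by
    constructor
    · rintro z ⟨hz, hlt⟩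
      exact ⟨hz, trans_of WellOrderingRel hlt h⟩
    · intro hsub
      have := hsub ⟨hx, h⟩
      exact irrefl_of WellOrderingRel x this.2
  have := Set.ncard_lt_ncard hss (hF.inter_of_left _)
  unfold rnk; omega

lemma rnk_injOn {α : Type} {F : Set α} (hF : F.Finite) :
    Set.InjOn (rnk F) F := by
  intro x hx y hy hxy
  rcases trichotomous_of WellOrderingRel x y with h | h | h
  · exact absurd hxy (Nat.ne_of_lt (rnk_lt hF hx h))
  · exact h
  · exact absurd hxy.symm (Nat.ne_of_lt (rnk_lt hF hy h))

lemma rnk_surj {α : Type} {F : Set α} (hF : F.Finite) {i : ℕ} (h1 : 1 ≤ i)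
    (h2 : i ≤ F.ncard) : ∃ d ∈ F, rnk F d = i := by
  have hsub : rnk F '' F ⊆ Set.Icc 1 F.ncard := by
    rintro n ⟨d, hd, rfl⟩
    exact ⟨one_le_rnk F d, rnk_le hF hd⟩
  have hIcc : (Set.Icc 1 F.ncard).ncard = F.ncard := by
    rw [← Finset.coe_Icc, Set.ncard_coe_finset, Nat.card_Icc]; omega
  have himg : (rnk F '' F).ncard = F.ncard := Set.ncard_image_of_injOn (rnk_injOn hF)
  have heq : rnk F '' F = Set.Icc 1 F.ncard := by
    exact Set.eq_of_subset_of_ncard_le hsub (by omega) (Set.finite_Icc _ _)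
  have : i ∈ rnk F '' F := heq ▸ Set.mem_Icc.2 ⟨h1, h2⟩
  obtain ⟨d, hd, hdi⟩ := this
  exact ⟨d, hd, hdi⟩

section Bisim
variable {CN RN Ind : Type} {I : DB CN RN Ind}

lemma bisim_refl (hrole : ∀ r a b, I.roleFact r a b → a ∈ I.adom ∧ b ∈ I.adom)
    {a : Ind} (ha : a ∈ I.adom) : Bisimilar I a a := by
  refine ⟨fun x y => x = y ∧ x ∈ I.adom, ⟨fun x y ⟨h, hx⟩ => ⟨hx, h ▸ hx⟩, ?_⟩, rfl, ha⟩
  rintro x y ⟨rfl, hx⟩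
  refine ⟨fun A => Iff.rfl, fun r D hD => ⟨D, hD, id, Set.bijOn_id D, ?_⟩,
    fun r E hE => ⟨E, hE, id, Set.bijOn_id E, ?_⟩⟩
  · exact fun d hd => ⟨rfl, (hrole r x d (hD hd)).2⟩
  · exact fun d hd => ⟨rfl, (hrole r x d (hE hd)).2⟩

lemma bisim_symm {a b : Ind} (h : Bisimilar I a b) : Bisimilar I b a := by
  obtain ⟨S, ⟨hdom, hS⟩, hab⟩ := h
  haveI : Nonempty Ind := ⟨a⟩
  refine ⟨fun x y => S y x, ⟨fun x y h => ⟨(hdom _ _ h).2, (hdom _ _ h).1⟩, ?_⟩, hab⟩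
  intro x y hyx
  obtain ⟨hA, h2, h3⟩ := hS y x hyx
  refine ⟨fun A => (hA A).symm, ?_, ?_⟩
  · intro r D hD
    obtain ⟨D', hD', f', hbij', hf'⟩ := h3 r D hD
    refine ⟨D', hD', Function.invFunOn f' D', ?_, ?_⟩
    · exact Set.BijOn.symm (Set.BijOn.invOn_invFunOn hbij').symm hbij'
    · intro d hd
      have h1 : Function.invFunOn f' D' d ∈ D' := (Set.BijOn.symm (Set.BijOn.invOn_invFunOn hbij').symm hbij').mapsTo hd
      have h2' : f' (Function.invFunOn f' D' d) = d := (Set.BijOn.invOn_invFunOn hbij').2 hd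
      have := hf' _ h1
      rwa [h2'] at this
  · intro r E hE
    obtain ⟨E', hE', f', hbij', hf'⟩ := h2 r E hE
    refine ⟨E', hE', Function.invFunOn f' E, ?_, ?_⟩
    · exact Set.BijOn.symm (Set.BijOn.invOn_invFunOn hbij').symm hbij'
    · intro d hd
      have h1 : Function.invFunOn f' E d ∈ E := (Set.BijOn.symm (Set.BijOn.invOn_invFunOn hbij').symm hbij').mapsTo hd
      have h2' : f' (Function.invFunOn f' E d) = d := (Set.BijOn.invOn_invFunOn hbij').2 hd
      have := hf' _ h1
      rwa [h2'] at this

lemma bisim_trans {a b c : Ind} (h1 : Bisimilar I a b) (h2 : Bisimilar I b c) :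
    Bisimilar I a c := by
  obtain ⟨S, ⟨hSdom, hS⟩, hab⟩ := h1
  obtain ⟨T, ⟨hTdom, hT⟩, hbc⟩ := h2
  refine ⟨fun x z => ∃ y, S x y ∧ T y z,
    ⟨fun x z ⟨y, hxy, hyz⟩ => ⟨(hSdom _ _ hxy).1, (hTdom _ _ hyz).2⟩, ?_⟩, b, hab, hbc⟩
  rintro x z ⟨y, hxy, hyz⟩
  obtain ⟨hA1, hf1, hb1⟩ := hS x y hxy
  obtain ⟨hA2, hf2, hb2⟩ := hT y z hyz
  refine ⟨fun A => (hA1 A).trans (hA2 A), ?_, ?_⟩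
  · intro r D hD
    obtain ⟨E, hE, f, hbijf, hf⟩ := hf1 r D hD
    obtain ⟨F, hF, g, hbijg, hg⟩ := hf2 r E hE
    exact ⟨F, hF, g ∘ f, hbijg.comp hbijf, fun d hd =>
      ⟨f d, hf d hd, hg (f d) (hbijf.mapsTo hd)⟩⟩
  · intro r F hF
    obtain ⟨E, hE, g, hbijg, hg⟩ := hb2 r F hF
    obtain ⟨D, hD, f, hbijf, hf⟩ := hb1 r E hE
    exact ⟨D, hD, g ∘ f, hbijg.comp hbijf, fun d hd =>
      ⟨f d, hf d hd, hg (f d) (hbijf.mapsTo hd)⟩⟩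

/-- `Bisimilar I` is itself a bisimulation (maximal). -/
lemma bisim_max : IsALCQBisim I (Bisimilar I) := by
  constructor
  · rintro a b ⟨S, ⟨hdom, _⟩, hab⟩
    exact hdom _ _ hab
  · rintro a b ⟨S, hS, hab⟩
    obtain ⟨hA, h2, h3⟩ := hS.2 a b hab
    refine ⟨hA, ?_, ?_⟩
    · intro r D hD
      obtain ⟨E, hE, f, hbij, hf⟩ := h2 r D hD
      exact ⟨E, hE, f, hbij, fun d hd => ⟨S, hS, hf d hd⟩⟩
    · intro r E hE
      obtain ⟨D, hD, f, hbij, hf⟩ := h3 r E hE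
      exact ⟨D, hD, f, hbij, fun d hd => ⟨S, hS, hf d hd⟩⟩

variable (hrole : ∀ r a b, I.roleFact r a b → a ∈ I.adom ∧ b ∈ I.adom)
include hrole

lemma mem_cls_self {a : Ind} (ha : a ∈ I.adom) : a ∈ cls I a := bisim_refl hrole ha

omit hrole in
lemma cls_eq_of_bisim {a b : Ind} (h : Bisimilar I a b) : cls I a = cls I b := by
  ext x
  exact ⟨fun hx => bisim_trans (bisim_symm h) hx, fun hx => bisim_trans h hx⟩

lemma bisim_of_cls_eq {a b : Ind} (hb : b ∈ I.adom) (h : cls I a = cls I b) :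
    Bisimilar I a b := by
  have : b ∈ cls I a := h ▸ mem_cls_self hrole hb
  exact this

end Bisim

section Inv
variable {CN RN Ind₁ Ind₂ : Type}

/-- ALCQ invariance under bisimulations between databases. -/
lemma sem_iff_of_bisim2 (I : DB CN RN Ind₁) (J : DB CN RN Ind₂)
    (hI : ∀ r a, (I.succ r a).Finite) (hJ : ∀ r b, (J.succ r b).Finite)
    (S : Ind₁ → Ind₂ → Prop) (hS : IsALCQBisim2 I J S) (C : ALCQ CN RN) :
    ∀ a b, S a b → (a ∈ C.sem I ↔ b ∈ C.sem J) := by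
  induction C with
  | top => exact fun a b hab => ⟨fun _ => (hS.1 a b hab).2, fun _ => (hS.1 a b hab).1⟩
  | atom A =>
    intro a b hab
    have hdom := hS.1 a b hab
    have hA := (hS.2 a b hab).1 A
    exact ⟨fun h => ⟨hdom.2, (hA).1 h.2⟩, fun h => ⟨hdom.1, (hA).2 h.2⟩⟩
  | neg C ih =>
    intro a b hab
    have hdom := hS.1 a b hab
    have := ih a b hab
    exact ⟨fun h => ⟨hdom.2, fun hc => h.2 (this.2 hc)⟩,
      fun h => ⟨hdom.1, fun hc => h.2 (this.1 hc)⟩⟩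
  | inter C D ihC ihD =>
    intro a b hab
    exact ⟨fun h => ⟨(ihC a b hab).1 h.1, (ihD a b hab).1 h.2⟩,
      fun h => ⟨(ihC a b hab).2 h.1, (ihD a b hab).2 h.2⟩⟩
  | ge n r C ih =>
    intro a b hab
    have hdom := hS.1 a b hab
    have hcl := hS.2 a b hab
    constructor
    · rintro ⟨_, hn⟩
      refine ⟨hdom.2, ?_⟩
      obtain ⟨E, hE, f, hbij, hf⟩ := hcl.2.1 r (I.succ r a ∩ C.sem I) Set.inter_subset_left
      have hEsub : E ⊆ J.succ r b ∩ C.sem J := by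
        intro x hx
        obtain ⟨d, hd, rfl⟩ := hbij.surjOn hx
        exact ⟨hE hx, (ih d (f d) (hf d hd)).1 hd.2⟩
      have hcard : E.ncard = (I.succ r a ∩ C.sem I).ncard := by
        rw [← hbij.image_eq]; exact Set.ncard_image_of_injOn hbij.injOn
      calc n ≤ (I.succ r a ∩ C.sem I).ncard := hn
        _ = E.ncard := hcard.symm
        _ ≤ (J.succ r b ∩ C.sem J).ncard :=
            Set.ncard_le_ncard hEsub ((hJ r b).inter_of_left _)
    · rintro ⟨_, hn⟩
      refine ⟨hdom.1, ?_⟩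
      obtain ⟨D, hD, f, hbij, hf⟩ := hcl.2.2 r (J.succ r b ∩ C.sem J) Set.inter_subset_left
      have hDsub : D ⊆ I.succ r a ∩ C.sem I := by
        intro d hd
        exact ⟨hD hd, (ih d (f d) (hf d hd)).2 (hbij.mapsTo hd).2⟩
      have hcard : D.ncard = (J.succ r b ∩ C.sem J).ncard := by
        rw [← hbij.image_eq]; exact (Set.ncard_image_of_injOn hbij.injOn).symm
      calc n ≤ (J.succ r b ∩ C.sem J).ncard := hn
        _ = D.ncard := hcard.symm
        _ ≤ (I.succ r a ∩ C.sem I).ncard :=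
            Set.ncard_le_ncard hDsub ((hI r a).inter_of_left _)
  | le n r C ih =>
    intro a b hab
    have hdom := hS.1 a b hab
    have hcl := hS.2 a b hab
    constructor
    · rintro ⟨_, hn⟩
      refine ⟨hdom.2, ?_⟩
      obtain ⟨D, hD, f, hbij, hf⟩ := hcl.2.2 r (J.succ r b ∩ C.sem J) Set.inter_subset_left
      have hDsub : D ⊆ I.succ r a ∩ C.sem I := by
        intro d hd
        exact ⟨hD hd, (ih d (f d) (hf d hd)).2 (hbij.mapsTo hd).2⟩
      have hcard : D.ncard = (J.succ r b ∩ C.sem J).ncard := by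
        rw [← hbij.image_eq]; exact (Set.ncard_image_of_injOn hbij.injOn).symm
      calc (J.succ r b ∩ C.sem J).ncard = D.ncard := hcard.symm
        _ ≤ (I.succ r a ∩ C.sem I).ncard :=
            Set.ncard_le_ncard hDsub ((hI r a).inter_of_left _)
        _ ≤ n := hn
    · rintro ⟨_, hn⟩
      refine ⟨hdom.1, ?_⟩
      obtain ⟨E, hE, f, hbij, hf⟩ := hcl.2.1 r (I.succ r a ∩ C.sem I) Set.inter_subset_left
      have hEsub : E ⊆ J.succ r b ∩ C.sem J := by
        intro x hx
        obtain ⟨d, hd, rfl⟩ := hbij.surjOn hx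
        exact ⟨hE hx, (ih d (f d) (hf d hd)).1 hd.2⟩
      have hcard : E.ncard = (I.succ r a ∩ C.sem I).ncard := by
        rw [← hbij.image_eq]; exact Set.ncard_image_of_injOn hbij.injOn
      calc (I.succ r a ∩ C.sem I).ncard = E.ncard := hcard.symm
        _ ≤ (J.succ r b ∩ C.sem J).ncard :=
            Set.ncard_le_ncard hEsub ((hJ r b).inter_of_left _)
        _ ≤ n := hn
end Inv

section Count
variable {CN RN Ind : Type} {I : DB CN RN Ind}
variable (hfin : I.adom.Finite)
variable (hrole : ∀ r a b, I.roleFact r a b → a ∈ I.adom ∧ b ∈ I.adom)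
include hrole

omit hfin in
lemma succ_sub_adom (r : RN) (a : Ind) : I.succ r a ⊆ I.adom :=
  fun b hb => (hrole r a b hb).2

include hfin

lemma succ_finite (r : RN) (a : Ind) : (I.succ r a).Finite :=
  hfin.subset (succ_sub_adom hrole r a)

/-- Bisimilar elements have the same number of `r`-successors in each class. -/
lemma count_inv {a b : Ind} (h : Bisimilar I a b) (r : RN) (d : Ind) :
    (I.succ r a ∩ cls I d).ncard = (I.succ r b ∩ cls I d).ncard := by
  have key : ∀ x y : Ind, Bisimilar I x y →
      (I.succ r x ∩ cls I d).ncard ≤ (I.succ r y ∩ cls I d).ncard := by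
    intro x y hxy
    obtain ⟨_, h2, _⟩ := bisim_max.2 x y hxy
    obtain ⟨E, hE, f, hbij, hf⟩ := h2 r (I.succ r x ∩ cls I d) Set.inter_subset_left
    have hEsub : E ⊆ I.succ r y ∩ cls I d := by
      intro z hz
      obtain ⟨u, hu, rfl⟩ := hbij.surjOn hz
      exact ⟨hE hz, bisim_trans hu.2 (hf u hu)⟩
    have hcard : E.ncard = (I.succ r x ∩ cls I d).ncard := by
      rw [← hbij.image_eq]; exact Set.ncard_image_of_injOn hbij.injOn
    rw [← hcard]
    exact Set.ncard_le_ncard hEsub ((succ_finite hfin hrole r y).inter_of_left _)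
  exact le_antisymm (key a b h) (key b a (bisim_symm h))

lemma ncard_le_maxCnt {b : Ind} (hb : b ∈ I.adom) (r : RN) (X : Set Ind) :
    (I.succ r b ∩ X).ncard ≤ maxCnt I X := by
  apply le_csSup
  · refine ⟨I.adom.ncard, ?_⟩
    rintro n ⟨c, hc, r', rfl⟩
    exact Set.ncard_le_ncard ((Set.inter_subset_left).trans (succ_sub_adom hrole r' c)) hfin
  · exact ⟨b, hb, r, rfl⟩

omit hfin hrole in
lemma mem_qadom_of {a : Ind} (ha : a ∈ I.adom) {i : ℕ} (h1 : 1 ≤ i)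
    (h2 : i ≤ max 1 (maxCnt I (cls I a))) : (cls I a, i) ∈ qadom I :=
  ⟨a, ha, rfl, h1, h2⟩

lemma qadom_finite : (qadom I).Finite := by
  have hb : ∀ X : Set Ind, maxCnt I X ≤ I.adom.ncard := by
    intro X
    apply csSup_le'
    rintro n ⟨c, hc, r', rfl⟩
    exact Set.ncard_le_ncard ((Set.inter_subset_left).trans (succ_sub_adom hrole r' c)) hfin
  have hsub : qadom I ⊆ ((fun a => cls I a) '' I.adom) ×ˢ Set.Icc 1 (max 1 I.adom.ncard) := by
    rintro ⟨X, i⟩ ⟨a, ha, hX, h1, h2⟩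
    refine ⟨⟨a, ha, hX.symm⟩, h1, ?_⟩
    simp only at hX h2 ⊢
    have := hb X
    omega
  exact ((hfin.image _).prod (Set.finite_Icc _ _)).subset hsub

omit hfin hrole in
lemma quot_succ_sub (r : RN) (p : Set Ind × ℕ) : (quotDB I).succ r p ⊆ qadom I := by
  rintro q ⟨_, hq, _⟩
  exact hq

end Count

section Main
variable {CN RN Ind : Type} {I : DB CN RN Ind}
variable (hfin : I.adom.Finite)
variable (hrole : ∀ r a b, I.roleFact r a b → a ∈ I.adom ∧ b ∈ I.adom)
include hfin hrole

/-- The canonical bisimulation between `I` and its quotient. -/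
lemma quot_bisim :
    IsALCQBisim2 I (quotDB I)
      (fun a p => a ∈ I.adom ∧ p ∈ qadom I ∧ p.1 = cls I a) := by
  constructor
  · exact fun a p h => ⟨h.1, h.2.1⟩
  · rintro a p ⟨ha, hp, hcls⟩
    have hbis_of : ∀ a' : Ind, p.1 = cls I a' → Bisimilar I a' a := by
      intro a' ha'
      have : a ∈ cls I a' := by rw [← ha', hcls]; exact mem_cls_self hrole ha
      exact this
    refine ⟨?_, ?_, ?_⟩
    · -- atoms
      intro A
      constructor
      · exact fun h => ⟨hp, a, hcls, h⟩
      · rintro ⟨_, a', ha', hA⟩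
        exact ((bisim_max.2 a' a (hbis_of a' ha')).1 A).1 hA
    · -- forward
      intro r D hD
      classical
      set f : Ind → Set Ind × ℕ := fun d => (cls I d, rnk (I.succ r a ∩ cls I d) d) with hfdef
      have hmemF : ∀ d ∈ D, d ∈ I.succ r a ∩ cls I d := fun d hd =>
        ⟨hD hd, mem_cls_self hrole (hrole r a d (hD hd)).2⟩
      have hfinF : ∀ d : Ind, (I.succ r a ∩ cls I d).Finite := fun d =>
        (succ_finite hfin hrole r a).inter_of_left _
      have hrnk_le : ∀ d ∈ D, rnk (I.succ r a ∩ cls I d) d ≤ (I.succ r a ∩ cls I d).ncard :=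
        fun d hd => rnk_le (hfinF d) (hmemF d hd)
      have hfq : ∀ d ∈ D, f d ∈ qadom I := by
        intro d hd
        refine mem_qadom_of (hrole r a d (hD hd)).2 (one_le_rnk _ _) ?_
        calc rnk (I.succ r a ∩ cls I d) d ≤ (I.succ r a ∩ cls I d).ncard := hrnk_le d hd
          _ ≤ maxCnt I (cls I d) := ncard_le_maxCnt hfin hrole ha r _
          _ ≤ max 1 (maxCnt I (cls I d)) := le_max_right _ _
      have hinj : Set.InjOn f D := by
        intro x hx y hy hxy
        have h1 : cls I x = cls I y := congrArg Prod.fst hxy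
        have h2 : rnk (I.succ r a ∩ cls I x) x = rnk (I.succ r a ∩ cls I x) y := by
          have h3 := congrArg Prod.snd hxy
          simp only [hfdef] at h3
          rw [← h1] at h3
          exact h3
        exact rnk_injOn (hfinF x) (hmemF x hx) (h1 ▸ hmemF y hy) h2
      refine ⟨f '' D, ?_, f, hinj.bijOn_image, ?_⟩
      · rintro q ⟨d, hd, rfl⟩
        exact ⟨hp, hfq d hd, a, hcls, hrnk_le d hd⟩
      · exact fun d hd => ⟨(hrole r a d (hD hd)).2, hfq d hd, rfl⟩
    · -- backward
      intro r E hE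
      classical
      set f : Ind → Set Ind × ℕ := fun d => (cls I d, rnk (I.succ r a ∩ cls I d) d) with hfdef
      set D : Set Ind := {d | d ∈ I.succ r a ∧ f d ∈ E} with hDdef
      have hD : D ⊆ I.succ r a := fun d hd => hd.1
      have hmemF : ∀ d ∈ D, d ∈ I.succ r a ∩ cls I d := fun d hd =>
        ⟨hd.1, mem_cls_self hrole (hrole r a d hd.1).2⟩
      have hfinF : ∀ d : Ind, (I.succ r a ∩ cls I d).Finite := fun d =>
        (succ_finite hfin hrole r a).inter_of_left _
      have hinj : Set.InjOn f D := by
        intro x hx y hy hxy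
        have h1 : cls I x = cls I y := congrArg Prod.fst hxy
        have h2 : rnk (I.succ r a ∩ cls I x) x = rnk (I.succ r a ∩ cls I x) y := by
          have h3 := congrArg Prod.snd hxy
          simp only [hfdef] at h3
          rw [← h1] at h3
          exact h3
        exact rnk_injOn (hfinF x) (hmemF x hx) (h1 ▸ hmemF y hy) h2
      have hsurj : Set.SurjOn f D E := by
        rintro q hq
        obtain ⟨hp', hq', a', ha', hle⟩ := hE hq
        obtain ⟨d0, hd0, hq1, hq2, _⟩ := hq'
        -- q.1 = cls I d0, q.2 ≤ ncard (succ r a' ∩ q.1)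
        have hbis : Bisimilar I a' a := hbis_of a' ha'
        have hcnt : (I.succ r a' ∩ cls I d0).ncard = (I.succ r a ∩ cls I d0).ncard :=
          count_inv hfin hrole hbis r d0
        rw [hq1] at hle
        rw [hcnt] at hle
        obtain ⟨d, hdmem, hdrnk⟩ := rnk_surj (hfinF d0) hq2 hle
        have hdad : d ∈ I.adom := (hrole r a d hdmem.1).2
        have hclsd : cls I d0 = cls I d := cls_eq_of_bisim hdmem.2
        have hfd : f d = q := by
          have : f d = (cls I d0, rnk (I.succ r a ∩ cls I d0) d) := by
            simp only [hfdef, ← hclsd]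
          rw [this, hdrnk, ← hq1]
        exact ⟨d, ⟨hdmem.1, hfd ▸ hq⟩, hfd⟩
      have hmapsto : Set.MapsTo f D E := fun d hd => hd.2
      refine ⟨D, hD, f, ⟨hmapsto, hinj, hsurj⟩, ?_⟩
      intro d hd
      refine ⟨(hrole r a d hd.1).2, ?_, rfl⟩
      exact (quot_succ_sub r p) (hE hd.2)

end Main

theorem stmt10 {CN RN Ind : Type} (I : DB CN RN Ind)
    (hfin : I.adom.Finite)
    (hrole : ∀ r a b, I.roleFact r a b → a ∈ I.adom ∧ b ∈ I.adom)
    (hconc : ∀ A a, I.concFact A a → a ∈ I.adom)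
    (P N : Set Ind) (hP : P ⊆ I.adom) (hN : N ⊆ I.adom)
    (C : ALCQ CN RN) :
    Fits I C P N ↔
      Fits (quotDB I) C ((fun p => (cls I p, 1)) '' P)
        ((fun n => (cls I n, 1)) '' N) := by
  have hJfin : ∀ r p, ((quotDB I).succ r p).Finite := fun r p =>
    (qadom_finite hfin hrole).subset (quot_succ_sub r p)
  have hIfin : ∀ r a, (I.succ r a).Finite := succ_finite hfin hrole
  have key : ∀ a ∈ I.adom, (a ∈ C.sem I ↔ (cls I a, 1) ∈ C.sem (quotDB I)) := by
    intro a ha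
    exact sem_iff_of_bisim2 I (quotDB I) hIfin hJfin _ (quot_bisim hfin hrole) C a _
      ⟨ha, mem_qadom_of ha le_rfl (le_max_left _ _), rfl⟩
  constructor
  · rintro ⟨h1, h2⟩
    constructor
    · rintro q ⟨x, hx, rfl⟩
      exact (key x (hP hx)).1 (h1 x hx)
    · rintro q ⟨x, hx, rfl⟩ hc
      exact h2 x hx ((key x (hN hx)).2 hc)
  · rintro ⟨h1, h2⟩
    constructor
    · intro x hx
      exact (key x (hP hx)).2 (h1 _ ⟨x, hx, rfl⟩)
    · intro x hx hc
      exact h2 _ ⟨x, hx, rfl⟩ ((key x (hN hx)).1 hc)
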